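/- Let (X, d) be a complete metric space, m ≥ 2, 1 ≤ r < m integers with gcd(m, r) = 1, and X = X_1 ∪ ... ∪ X_m a covering by nonempty closed sets. Suppose f : X → X satisfies f(X_i) ⊆ X_{i+r} for all i (indices mod m) and there is c ∈ [0, 1) such that d(f(x), f(y)) ≤ c·d(x, y) for all x ∈ X_i, y ∈ X_{i+r}, 1 ≤ i ≤ m. Then f has a unique fixed point x* in X, and for every x₀ ∈ X the Picard iteration x_{n+1} = f(x_n) converges to x*. -/

import Mathlib

open Filter Topology

theorem synchronous_r_cyclic_contraction_gcd_one {α : Type*} [MetricSpace α] [CompleteSpace α]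
    (m r : ℕ) (hm : 2 ≤ m) (hr : 1 ≤ r) (hrm : r < m) (hgcd : Nat.gcd m r = 1)
    (X : ZMod m → Set α) (hne : ∀ i, (X i).Nonempty) (hcl : ∀ i, IsClosed (X i))
    (hcov : (⋃ i, X i) = Set.univ) (f : α → α)
    (hcyc : ∀ i, ∀ x ∈ X i, f x ∈ X (i + (r : ZMod m)))
    (c : ℝ) (hc0 : 0 ≤ c) (hc1 : c < 1)
    (hcontr : ∀ i, ∀ x ∈ X i, ∀ y ∈ X (i + (r : ZMod m)),
      dist (f x) (f y) ≤ c * dist x y) :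
    ∃ xs : α, f xs = xs ∧ (∀ y, f y = y → y = xs) ∧
      ∀ x₀ : α, Tendsto (fun n => f^[n] x₀) atTop (𝓝 xs) := by
  haveI : NeZero m := ⟨by omega⟩
  -- every point is in some X i
  have hmem : ∀ z : α, ∃ i, z ∈ X i := by
    intro z
    have : z ∈ ⋃ i, X i := by rw [hcov]; trivial
    simpa using this
  obtain ⟨x₀, hx₀⟩ := hne 0
  set a : ℕ → α := fun n => f^[n] x₀ with ha
  -- orbit membership
  have horb : ∀ n : ℕ, a n ∈ X ((n : ZMod m) * r) := by
    intro n
    induction n with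
    | zero => simpa [ha] using hx₀
    | succ n ih =>
      have h2 := hcyc _ _ ih
      have : ((n : ZMod m) * r + r) = (((n : ℕ) + 1 : ℕ) : ZMod m) * r := by
        push_cast; ring
      rw [this] at h2
      simpa [ha, Function.iterate_succ_apply'] using h2
  -- geometric decay of successive distances
  have hdec : ∀ n : ℕ, dist (a n) (a (n + 1)) ≤ dist (a 0) (a 1) * c ^ n := by
    intro n
    induction n with
    | zero => simp
    | succ n ih =>
      have h1 := horb n
      have h2 := horb (n + 1)
      have h2' : a (n + 1) ∈ X ((n : ZMod m) * r + r) := by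
        have : (((n : ℕ) + 1 : ℕ) : ZMod m) * r = (n : ZMod m) * r + r := by
          push_cast; ring
        rwa [this] at h2
      have key := hcontr _ _ h1 _ h2'
      have e1 : f (a n) = a (n + 1) := by
        simp [ha, Function.iterate_succ_apply']
      have e2 : f (a (n + 1)) = a (n + 2) := by
        simp [ha, Function.iterate_succ_apply']
      rw [e1, e2] at key
      calc dist (a (n + 1)) (a (n + 2)) ≤ c * dist (a n) (a (n + 1)) := key
        _ ≤ c * (dist (a 0) (a 1) * c ^ n) := by
            exact mul_le_mul_of_nonneg_left ih hc0
        _ = dist (a 0) (a 1) * c ^ (n + 1) := by ring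
  have hcauchy : CauchySeq a := cauchySeq_of_le_geometric c _ hc1 hdec
  obtain ⟨xs, htend⟩ := cauchySeq_tendsto_of_complete hcauchy
  -- xs belongs to every X i
  have hxs : ∀ i : ZMod m, xs ∈ X i := by
    intro i
    have hcop : Nat.Coprime r m := Nat.coprime_comm.mp hgcd
    set u : (ZMod m)ˣ := ZMod.unitOfCoprime r hcop with hu
    have hur : (u : ZMod m) = (r : ZMod m) := ZMod.coe_unitOfCoprime r hcop
    set k : ℕ := (i * (↑u⁻¹ : ZMod m)).val with hk
    have hkr : (k : ZMod m) * r = i := by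
      rw [hk, ZMod.natCast_val, ZMod.cast_id, ← hur, mul_assoc]
      simp
    have hsub : ∀ t : ℕ, a (k + t * m) ∈ X i := by
      intro t
      have := horb (k + t * m)
      have e : ((k + t * m : ℕ) : ZMod m) * r = i := by
        push_cast
        simp [ZMod.natCast_self, hkr]
      rwa [e] at this
    have htt : Tendsto (fun t : ℕ => k + t * m) atTop atTop := by
      apply tendsto_atTop_mono (f := id)
      · intro t
        have : t ≤ t * m := Nat.le_mul_of_pos_right t (by omega)
        simpa using Nat.le_add_left _ _ |>.trans (Nat.add_le_add_left this k) |>.trans (le_refl _) |> fun _ => by omega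
      · exact tendsto_id
    exact (hcl i).mem_of_tendsto (htend.comp htt) (Eventually.of_forall hsub)
  -- key contraction against xs
  have hkey : ∀ z : α, dist (f xs) (f z) ≤ c * dist xs z := by
    intro z
    obtain ⟨j, hj⟩ := hmem z
    have h1 := hxs (j - (r : ZMod m))
    have h2 : z ∈ X (j - (r : ZMod m) + (r : ZMod m)) := by
      rwa [sub_add_cancel]
    exact hcontr _ _ h1 _ h2
  -- f xs = xs
  have hfix : f xs = xs := by
    have hbound : ∀ n : ℕ, dist (f xs) xs ≤ c * dist xs (a n) + dist (a (n + 1)) xs := by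
      intro n
      calc dist (f xs) xs ≤ dist (f xs) (a (n + 1)) + dist (a (n + 1)) xs :=
            dist_triangle _ _ _
        _ ≤ c * dist xs (a n) + dist (a (n + 1)) xs := by
            have := hkey (a n)
            have e : f (a n) = a (n + 1) := by
              simp [ha, Function.iterate_succ_apply']
            rw [e] at this
            linarith
    have hlim : Tendsto (fun n => c * dist xs (a n) + dist (a (n + 1)) xs) atTop (𝓝 0) := by
      have t1 : Tendsto (fun n => dist xs (a n)) atTop (𝓝 0) := by
        simpa [dist_comm] using tendsto_iff_dist_tendsto_zero.mp htend
      have t2 : Tendsto (fun n => dist (a (n + 1)) xs) atTop (𝓝 0) := by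
        have := tendsto_iff_dist_tendsto_zero.mp (htend.comp (tendsto_add_atTop_nat 1))
        simpa using this
      simpa using (t1.const_mul c).add t2
    have : dist (f xs) xs ≤ 0 := ge_of_tendsto hlim (Eventually.of_forall hbound)
    have := le_antisymm this dist_nonneg
    exact dist_eq_zero.mp this
  refine ⟨xs, hfix, ?_, ?_⟩
  · intro y hy
    have := hkey y
    rw [hfix, hy] at this
    have h0 : (1 - c) * dist xs y ≤ 0 := by linarith
    have : dist xs y ≤ 0 := by
      nlinarith [dist_nonneg (x := xs) (y := y)]
    exact (dist_eq_zero.mp (le_antisymm this dist_nonneg)).symm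
  · intro y₀
    have hbound : ∀ n : ℕ, dist (f^[n] y₀) xs ≤ c ^ n * dist y₀ xs := by
      intro n
      induction n with
      | zero => simp
      | succ n ih =>
        have := hkey (f^[n] y₀)
        rw [hfix] at this
        calc dist (f^[n + 1] y₀) xs = dist xs (f (f^[n] y₀)) := by
              rw [Function.iterate_succ_apply', dist_comm]
          _ ≤ c * dist xs (f^[n] y₀) := this
          _ = c * dist (f^[n] y₀) xs := by rw [dist_comm]
          _ ≤ c * (c ^ n * dist y₀ xs) := mul_le_mul_of_nonneg_left ih hc0
          _ = c ^ (n + 1) * dist y₀ xs := by ring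
    rw [tendsto_iff_dist_tendsto_zero]
    have hgeo : Tendsto (fun n : ℕ => c ^ n * dist y₀ xs) atTop (𝓝 0) := by
      simpa using (tendsto_pow_atTop_nhds_zero_of_lt_one hc0 hc1).mul_const (dist y₀ xs)
    exact squeeze_zero (fun n => dist_nonneg) hbound hgeo
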